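/- Let h be a linear function on flag vectors of convex polytopes with values in polynomials in x,y, satisfying h(pt)=1, h(IΔ)=(x+y)h(Δ) and h(DΔ)=xy·h(Δ) for the cylinder operator I and the operator D=IC−CC (C the cone operator). Then defining g(Δ)=h(CΔ)−x·h(Δ), one has g(∅)=1 and g(CL)=y·g(L) for every polytope L, i.e. h is a generalised h-vector. -/
import Mathlib


open MvPolynomial

noncomputable section

abbrev R2 : Type := MvPolynomial (Fin 2) ℚ

def px : R2 := X 0
def py : R2 := X 1

/-- if a linear function `h` on the span of flag vectors satisfies
`h(pt)=1`, `h(IΔ)=(x+y)h(Δ)` and `h(DΔ)=xy·h(Δ)` (where `D = IC - CC`), then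
`g(Δ) := h(CΔ) - x·h(Δ)` satisfies `g(∅)=1` and `g(CL)=y·g(L)`, i.e. `h` is a
generalised h-vector.  (`fempty` is the flag vector of `∅`, with `C∅ = pt` and
`h(∅)=0`, being the empty sum over faces.) -/
theorem stmt0 {V : Type} [AddCommGroup V] [Module ℚ V]
    (Cop Iop : V →ₗ[ℚ] V) (fempty fpt : V)
    (hCe : Cop fempty = fpt)
    (h : V →ₗ[ℚ] R2)
    (hpt : h fpt = 1) (h0 : h fempty = 0)
    (hI : ∀ v, h (Iop v) = (px + py) * h v)
    (hD : ∀ v, h (Iop (Cop v) - Cop (Cop v)) = px * py * h v) :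
    (h (Cop fempty) - px * h fempty = 1) ∧
      ∀ v : V, h (Cop (Cop v)) - px * h (Cop v) = py * (h (Cop v) - px * h v) := by
  constructor
  · rw [hCe, hpt, h0]; ring
  · intro v
    have hd := hD v
    rw [map_sub, hI (Cop v)] at hd
    linear_combination -hd
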